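/- Let G be a compact group which is D-quasi-random, with Haar probability measure dg, and let π : G → U(V) be a continuous unitary representation of G on a complex Hilbert space V. Then for all u, v ∈ V one has ∫_G | ⟨u, π^g v⟩_V − ⟨P°_π u, P°_π v⟩_V |² dg ≤ D^{-1/2} · ‖u‖_V² · ‖v‖_V². -/

import Mathlib

open scoped InnerProductSpace

/-- A topological group `G` is `D`-quasi-random if every nontrivial finite-dimensional
continuous unitary representation of `G` has dimension at least `D`. -/
def IsQuasiRandom (G : Type*) [Group G] [TopologicalSpace G] (D : ℕ) : Prop :=
  ∀ (V : Type) [NormedAddCommGroup V] [InnerProductSpace ℂ V] [FiniteDimensional ℂ V]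
    (π : G →* (V ≃ₗᵢ[ℂ] V)),
    (∀ v : V, Continuous fun g : G => π g v) →
    (∃ (g : G) (v : V), π g v ≠ v) →
    D ≤ Module.finrank ℂ V

/-- The subspace of vectors fixed by a unitary representation `π`. -/
def fixedSubmodule {G V : Type*} [Group G] [NormedAddCommGroup V] [InnerProductSpace ℂ V]
    (π : G →* (V ≃ₗᵢ[ℂ] V)) : Submodule ℂ V where
  carrier := {v | ∀ g : G, π g v = v}
  add_mem' := by
    intro a b ha hb g
    rw [map_add, ha g, hb g]
  zero_mem' := by
    intro g
    exact map_zero _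
  smul_mem' := by
    intro c a ha g
    rw [map_smul, ha g]

lemma isClosed_fixedSubmodule {G V : Type*} [Group G] [NormedAddCommGroup V]
    [InnerProductSpace ℂ V] (π : G →* (V ≃ₗᵢ[ℂ] V)) :
    IsClosed ((fixedSubmodule π : Submodule ℂ V) : Set V) := by
  have h : ((fixedSubmodule π : Submodule ℂ V) : Set V) = ⋂ g : G, {v : V | π g v = v} := by
    ext v
    simp only [SetLike.mem_coe, Set.mem_iInter, Set.mem_setOf_eq]
    exact Iff.rfl
  rw [h]
  exact isClosed_iInter fun g => isClosed_eq (π g).continuous continuous_id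

/-- The orthogonal projection `P°_π : V → V` onto the subspace of `π`-fixed vectors,
viewed as a continuous linear map from `V` to itself. -/
noncomputable def fixedProjection {G V : Type*} [Group G] [NormedAddCommGroup V]
    [InnerProductSpace ℂ V] [CompleteSpace V] (π : G →* (V ≃ₗᵢ[ℂ] V)) : V →L[ℂ] V :=
  haveI : CompleteSpace (fixedSubmodule π) := (isClosed_fixedSubmodule π).completeSpace_coe
  (fixedSubmodule π).subtypeL.comp ((fixedSubmodule π).orthogonalProjectionOnto)


open MeasureTheory



section IntegrableHelper

open MeasureTheory

lemma continuous_integrable_of_compact {X B : Type*} [TopologicalSpace X] [CompactSpace X]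
    [MeasurableSpace X] [OpensMeasurableSpace X] [NormedAddCommGroup B]
    (μ : MeasureTheory.Measure X) [IsFiniteMeasure μ] {f : X → B} (hf : Continuous f) :
    Integrable f μ := by
  have h := hf.continuousOn.integrableOn_compact' (μ := μ) isCompact_univ MeasurableSet.univ
  rwa [integrableOn_univ] at h

end IntegrableHelper

section Hilbert

variable {V : Type*} [NormedAddCommGroup V] [InnerProductSpace ℂ V]

/-- Cauchy–Schwarz inequality for a positive symmetric operator. -/
lemma op_inner_mul_le {T : V →L[ℂ] V} (hsym : ∀ x y : V, ⟪T x, y⟫_ℂ = ⟪x, T y⟫_ℂ)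
    (hpos : ∀ x : V, 0 ≤ (⟪x, T x⟫_ℂ).re) (x y : V) :
    ‖⟪x, T y⟫_ℂ‖ ^ 2 ≤ (⟪x, T x⟫_ℂ).re * (⟪y, T y⟫_ℂ).re := by
  by_cases hz : ⟪x, T y⟫_ℂ = 0
  · rw [hz]
    simpa using mul_nonneg (hpos x) (hpos y)
  · set z : ℂ := ⟪x, T y⟫_ℂ with hzdef
    have hz' : ‖z‖ ≠ 0 := norm_ne_zero_iff.mpr hz
    set c : ℂ := (starRingEnd ℂ) z / (‖z‖ : ℂ) with hcdef
    have hconjmul : (starRingEnd ℂ) z * z = ((‖z‖ : ℂ)) ^ 2 := by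
      simpa using RCLike.conj_mul z
    have hcz : c * z = (‖z‖ : ℂ) := by
      rw [hcdef, div_mul_eq_mul_div, hconjmul, sq, mul_div_assoc,
        div_self (Complex.ofReal_ne_zero.mpr hz'), mul_one]
    have hcnorm : ‖c‖ = 1 := by
      rw [hcdef, norm_div, RCLike.norm_conj]; simp; exact (by simpa using hz')
    have hcc : (starRingEnd ℂ) c * c = 1 := by
      have := RCLike.conj_mul c
      rw [this, hcnorm]
      norm_num
    have hxy' : ⟪T x, y⟫_ℂ = z := by rw [hsym x y, ← hzdef]
    have hyx : ⟪y, T x⟫_ℂ = (starRingEnd ℂ) z := by rw [← hxy', inner_conj_symm]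
    have key : ∀ t : ℝ, 0 ≤ (⟪x, T x⟫_ℂ).re * (t * t) + (2 * ‖z‖) * t + (⟪y, T y⟫_ℂ).re := by
      intro t
      have h0 := hpos ((t : ℂ) • x + c • y)
      have h1 : (starRingEnd ℂ) c * (starRingEnd ℂ) z = (‖z‖ : ℂ) := by
        rw [← map_mul, hcz]; exact Complex.conj_ofReal _
      have expand : ⟪(t : ℂ) • x + c • y, T ((t : ℂ) • x + c • y)⟫_ℂ
          = ((t * t : ℝ) : ℂ) * ⟪x, T x⟫_ℂ + ((2 * (‖z‖ * t) : ℝ) : ℂ) + ⟪y, T y⟫_ℂ := by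
        simp only [map_add, _root_.map_smul, inner_add_left, inner_add_right, inner_smul_left,
          inner_smul_right, Complex.conj_ofReal]
        rw [hyx, ← hzdef]
        push_cast
        linear_combination (t : ℂ) * hcz + (t : ℂ) * h1 + ⟪y, T y⟫_ℂ * hcc
      rw [expand] at h0
      simp only [Complex.add_re, Complex.ofReal_re, Complex.re_ofReal_mul] at h0
      linarith
    have hd := discrim_le_zero key
    rw [discrim] at hd
    nlinarith [norm_nonneg z]

end Hilbert

section Eigen

variable {V : Type*} [NormedAddCommGroup V] [InnerProductSpace ℂ V] [CompleteSpace V]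

/-- A nonzero compact positive symmetric operator has a positive eigenvalue whose value dominates
the Rayleigh quotient. -/
lemma exists_eigenvector_of_compact {T : V →L[ℂ] V} (hcomp : IsCompactOperator T)
    (hsym : ∀ x y : V, ⟪T x, y⟫_ℂ = ⟪x, T y⟫_ℂ) (hpos : ∀ x : V, 0 ≤ (⟪x, T x⟫_ℂ).re)
    {x₀ : V} (hx₀ : 0 < (⟪x₀, T x₀⟫_ℂ).re) :
    ∃ (lam : ℝ) (e : V), 0 < lam ∧ ‖e‖ = 1 ∧ T e = (lam : ℂ) • e ∧
      ∀ y : V, (⟪y, T y⟫_ℂ).re ≤ lam * ‖y‖ ^ 2 := by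
  have hx₀0 : x₀ ≠ 0 := by
    rintro rfl
    simp at hx₀
  have hnx₀ : ‖x₀‖ ≠ 0 := norm_ne_zero_iff.mpr hx₀0
  set S : Set ℝ := (fun x : V => (⟪x, T x⟫_ℂ).re) '' Metric.sphere 0 1 with hSdef
  have hmem : ∀ x : V, ‖x‖ = 1 → (⟪x, T x⟫_ℂ).re ∈ S := by
    intro x hx
    exact ⟨x, by simpa [mem_sphere_zero_iff_norm] using hx, rfl⟩
  have hSne : S.Nonempty := by
    refine ⟨_, hmem (((‖x₀‖⁻¹ : ℝ) : ℂ) • x₀) ?_⟩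
    rw [norm_smul]
    simp [hnx₀]
  have hSbdd : BddAbove S := by
    refine ⟨‖T‖, ?_⟩
    rintro r ⟨x, hx, rfl⟩
    rw [mem_sphere_zero_iff_norm] at hx
    calc (⟪x, T x⟫_ℂ).re ≤ ‖⟪x, T x⟫_ℂ‖ := Complex.re_le_norm _
      _ ≤ ‖x‖ * ‖T x‖ := norm_inner_le_norm _ _
      _ ≤ ‖x‖ * (‖T‖ * ‖x‖) := by
          exact mul_le_mul_of_nonneg_left (T.le_opNorm x) (norm_nonneg x)
      _ = ‖T‖ := by rw [hx]; ring
  set lam : ℝ := sSup S with hlamdef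
  have hlam_bound : ∀ y : V, (⟪y, T y⟫_ℂ).re ≤ lam * ‖y‖ ^ 2 := by
    intro y
    by_cases hy : y = 0
    · simp [hy]
    · have hny : ‖y‖ ≠ 0 := norm_ne_zero_iff.mpr hy
      have h1 : (⟪((‖y‖⁻¹ : ℝ) : ℂ) • y, T (((‖y‖⁻¹ : ℝ) : ℂ) • y)⟫_ℂ).re ≤ lam := by
        apply le_csSup hSbdd
        apply hmem
        rw [norm_smul]
        simp [hny]
      rw [_root_.map_smul, inner_smul_left, inner_smul_right, Complex.conj_ofReal,
        ← mul_assoc, ← Complex.ofReal_mul, Complex.re_ofReal_mul] at h1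
      have hy2 : 0 < ‖y‖ ^ 2 := by positivity
      rw [← mul_inv, ← sq] at h1
      calc (⟪y, T y⟫_ℂ).re = (‖y‖ ^ 2) * ((‖y‖ ^ 2)⁻¹ * (⟪y, T y⟫_ℂ).re) := by
            field_simp
        _ ≤ (‖y‖ ^ 2) * lam := by
            exact mul_le_mul_of_nonneg_left h1 (le_of_lt hy2)
        _ = lam * ‖y‖ ^ 2 := by ring
  have hlam_pos : 0 < lam := by
    have := hlam_bound x₀
    nlinarith [sq_nonneg ‖x₀‖]
  have hlamC : (lam : ℂ) ≠ 0 := Complex.ofReal_ne_zero.mpr (ne_of_gt hlam_pos)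
  -- Cauchy-Schwarz gives a bound on ‖T y‖
  have hTy_sq : ∀ y : V, ‖y‖ = 1 → ‖T y‖ ^ 2 ≤ lam * (⟪y, T y⟫_ℂ).re := by
    intro y hy
    by_cases hTy : T y = 0
    · rw [hTy]
      simpa using mul_nonneg (le_of_lt hlam_pos) (hpos y)
    · have hcs := op_inner_mul_le hsym hpos (T y) y
      have hself : (⟪T y, T (T y)⟫_ℂ).re ≤ lam * ‖T y‖ ^ 2 := hlam_bound (T y)
      rw [inner_self_eq_norm_sq_to_K, norm_pow] at hcs
      simp only [RCLike.norm_ofReal, abs_norm] at hcs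
      have hTypos : 0 < ‖T y‖ ^ 2 := by
        have := norm_pos_iff.mpr hTy
        positivity
      nlinarith [hpos y, hpos (T y), mul_le_mul_of_nonneg_right hself (hpos y), hTypos,
        hlam_pos]
  -- a maximizing sequence
  have hseq : ∀ n : ℕ, ∃ x : V, ‖x‖ = 1 ∧ lam - 1 / (n + 1) < (⟪x, T x⟫_ℂ).re := by
    intro n
    have hlt : lam - 1 / (n + 1) < sSup S := by
      rw [← hlamdef]
      have : (0 : ℝ) < 1 / (n + 1) := by positivity
      linarith
    obtain ⟨r, hrS, hr⟩ := exists_lt_of_lt_csSup hSne hlt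
    obtain ⟨x, hx, rfl⟩ := hrS
    exact ⟨x, mem_sphere_zero_iff_norm.mp hx, hr⟩
  choose x hx1 hx2 using hseq
  -- compactness: extract a convergent subsequence of `T ∘ x`
  obtain ⟨K0, hK0c, hK0⟩ := hcomp
  obtain ⟨ε, hε, hball⟩ := Metric.mem_nhds_iff.mp hK0
  set Kc : Set V := (fun w : V => (2 / ε) • w) '' K0 with hKcdef
  have hKcIsc : IsCompact Kc := hK0c.image (continuous_const_smul _)
  have hTxmem : ∀ n, T (x n) ∈ Kc := by
    intro n
    have h1 : (ε / 2) • x n ∈ Metric.ball (0 : V) ε := by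
      rw [Metric.mem_ball, dist_zero_right, norm_smul, hx1 n, mul_one, Real.norm_eq_abs,
        abs_of_pos (by positivity)]
      linarith
    have h2 : T ((ε / 2) • x n) ∈ K0 := hball h1
    have heq : (2 / ε) • T ((ε / 2) • x n) = T (x n) := by
      rw [T.map_smul_of_tower, smul_smul, div_mul_div_comm, mul_comm ε 2,
        div_self (by positivity), one_smul]
    exact ⟨T ((ε / 2) • x n), h2, heq⟩
  obtain ⟨a, -, φ, hφmono, hφtend⟩ := hKcIsc.isSeqCompact hTxmem
  -- the defect tends to zero
  have hdefect : ∀ n, ‖T (x n) - (lam : ℂ) • x n‖ ^ 2 ≤ lam * (lam - (⟪x n, T (x n)⟫_ℂ).re) := by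
    intro n
    have hns := norm_sub_sq (𝕜 := ℂ) (T (x n)) ((lam : ℂ) • x n)
    simp only [RCLike.re_to_complex] at hns
    have hre : (⟪T (x n), (lam : ℂ) • x n⟫_ℂ).re = lam * (⟪x n, T (x n)⟫_ℂ).re := by
      rw [inner_smul_right]
      have hcj : ⟪T (x n), x n⟫_ℂ = (starRingEnd ℂ) ⟪x n, T (x n)⟫_ℂ := by
        rw [inner_conj_symm]
      rw [hcj, Complex.re_ofReal_mul, Complex.conj_re]
    have hnl : ‖(lam : ℂ) • x n‖ ^ 2 = lam ^ 2 := by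
      rw [norm_smul, hx1 n, mul_one, Complex.norm_real, Real.norm_eq_abs, sq_abs]
    rw [hre, hnl] at hns
    have hb := hTy_sq (x n) (hx1 n)
    nlinarith [hns]
  have hφn : ∀ n : ℕ, (n : ℝ) ≤ φ n := fun n => Nat.cast_le.mpr (hφmono.le_apply)
  have htend_sq : Filter.Tendsto (fun n => ‖T (x (φ n)) - (lam : ℂ) • x (φ n)‖ ^ 2)
      Filter.atTop (nhds 0) := by
    apply squeeze_zero (fun n => sq_nonneg _) (fun n => ?_)
      (g := fun n : ℕ => lam * (1 / (n + 1)))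
    · have := Filter.Tendsto.const_mul lam tendsto_one_div_add_atTop_nhds_zero_nat
      simpa using this
    · refine (hdefect (φ n)).trans ?_
      have h1 : lam - (⟪x (φ n), T (x (φ n))⟫_ℂ).re < 1 / (φ n + 1) := by
        have := hx2 (φ n)
        linarith
      have h2 : (1 : ℝ) / (φ n + 1) ≤ 1 / (n + 1) := by
        apply one_div_le_one_div_of_le (by positivity)
        have := hφn n
        linarith
      have := le_of_lt h1
      nlinarith [hlam_pos]
  have htend : Filter.Tendsto (fun n => T (x (φ n)) - (lam : ℂ) • x (φ n))
      Filter.atTop (nhds 0) := by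
    rw [tendsto_zero_iff_norm_tendsto_zero]
    have hs : Filter.Tendsto (fun n => Real.sqrt (‖T (x (φ n)) - (lam : ℂ) • x (φ n)‖ ^ 2))
        Filter.atTop (nhds (Real.sqrt 0)) :=
      (Real.continuous_sqrt.continuousAt.tendsto).comp htend_sq
    simpa [Real.sqrt_sq (norm_nonneg _)] using hs
  have hla : Filter.Tendsto (fun n => (lam : ℂ) • x (φ n)) Filter.atTop (nhds a) := by
    have := hφtend.sub htend
    simpa using this
  set e : V := (lam : ℂ)⁻¹ • a with hedef
  have hxe : Filter.Tendsto (fun n => x (φ n)) Filter.atTop (nhds e) := by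
    have h := hla.const_smul ((lam : ℂ)⁻¹)
    simp only [smul_smul, inv_mul_cancel₀ hlamC, one_smul] at h
    rw [hedef]
    exact h
  have hae : a = (lam : ℂ) • e := by
    rw [hedef, smul_smul, mul_inv_cancel₀ hlamC, one_smul]
  have hnorme : ‖e‖ = 1 := by
    have h1 : Filter.Tendsto (fun n => ‖x (φ n)‖) Filter.atTop (nhds ‖e‖) :=
      (continuous_norm.continuousAt.tendsto).comp hxe
    have h2 : Filter.Tendsto (fun n => ‖x (φ n)‖) Filter.atTop (nhds 1) := by
      simp only [hx1]
      exact tendsto_const_nhds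
    exact tendsto_nhds_unique h1 h2
  have hTe : T e = (lam : ℂ) • e := by
    have h1 : Filter.Tendsto (fun n => T (x (φ n))) Filter.atTop (nhds (T e)) :=
      (T.continuous.continuousAt.tendsto).comp hxe
    rw [← hae]
    exact tendsto_nhds_unique h1 hφtend
  exact ⟨lam, e, hlam_pos, hnorme, hTe, hlam_bound⟩

end Eigen

section Orthonormal

variable {V : Type*} [NormedAddCommGroup V] [InnerProductSpace ℂ V]

lemma exists_orthonormal_in_submodule (W : Submodule ℂ V) [CompleteSpace ↥W] (D : ℕ)
    (h : ¬ FiniteDimensional ℂ ↥W ∨ D ≤ Module.finrank ℂ ↥W) :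
    ∃ f : Fin D → V, Orthonormal ℂ f ∧ ∀ i, f i ∈ W := by
  have lift : ∀ f₀ : Fin D → ↥W, Orthonormal ℂ f₀ →
      ∃ f : Fin D → V, Orthonormal ℂ f ∧ ∀ i, f i ∈ W := by
    intro f₀ hf₀
    refine ⟨fun i => (f₀ i : V), ?_, fun i => (f₀ i).2⟩
    rw [orthonormal_iff_ite] at hf₀ ⊢
    intro i j
    rw [← Submodule.coe_inner]
    exact hf₀ i j
  rcases h with h | h
  · obtain ⟨w, b, hb⟩ := exists_hilbertBasis ℂ ↥W
    have hwinf : w.Infinite := by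
      intro hfin
      apply h
      haveI : FiniteDimensional ℂ ↥(Submodule.span ℂ w) :=
        FiniteDimensional.span_of_finite ℂ hfin
      have hspan : Submodule.span ℂ w = (⊤ : Submodule ℂ ↥W) := by
        have hd := b.dense_span
        rw [hb, Subtype.range_coe] at hd
        have hclosed : IsClosed ((Submodule.span ℂ w : Submodule ℂ ↥W) : Set ↥W) :=
          Submodule.closed_of_finiteDimensional _
        rwa [IsClosed.submodule_topologicalClosure_eq hclosed] at hd
      haveI : FiniteDimensional ℂ ↥(⊤ : Submodule ℂ ↥W) := hspan ▸ inferInstance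
      exact Submodule.topEquiv.finiteDimensional
    haveI := hwinf.to_subtype
    set emb : Fin D ↪ ↥w := (Fin.valEmbedding).trans (Infinite.natEmbedding ↥w) with hembdef
    have hon : Orthonormal ℂ (⇑b ∘ emb) := b.orthonormal.comp emb emb.injective
    exact lift _ (by rwa [hb] at hon)
  · by_cases hFD : FiniteDimensional ℂ ↥W
    swap
    · have hD0 : D = 0 := by
        rw [Module.finrank_of_infinite_dimensional hFD] at h
        omega
      subst hD0
      refine ⟨Fin.elim0, ?_, fun i => i.elim0⟩
      rw [orthonormal_iff_ite]
      intro i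
      exact i.elim0
    let B := stdOrthonormalBasis ℂ ↥W
    have hcast : ∀ i : Fin D, (i : ℕ) < Module.finrank ℂ ↥W := fun i => lt_of_lt_of_le i.2 h
    refine lift (fun i => B ⟨i, hcast i⟩) (B.orthonormal.comp _ ?_)
    intro a b hab
    simpa [Fin.ext_iff] using hab

end Orthonormal

section Rep

variable {G V : Type*} [Group G] [TopologicalSpace G]
variable [NormedAddCommGroup V] [InnerProductSpace ℂ V]

lemma pi_mul_apply (π : G →* (V ≃ₗᵢ[ℂ] V)) (g h : G) (x : V) :
    π (g * h) x = π g (π h x) := by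
  rw [map_mul]
  rfl

lemma pi_inv_apply (π : G →* (V ≃ₗᵢ[ℂ] V)) (g : G) (x : V) :
    π g⁻¹ (π g x) = x := by
  rw [← pi_mul_apply, inv_mul_cancel, map_one]
  rfl

/-- Restriction of `π` to an invariant submodule, transported to a Euclidean space, witnesses
quasirandomness, so the dimension of a nontrivially-acted-on invariant submodule is at least `D`. -/
lemma le_finrank_of_invariant {D : ℕ} (hQR : IsQuasiRandom G D)
    (π : G →* (V ≃ₗᵢ[ℂ] V)) (hπ : ∀ v : V, Continuous fun g : G => π g v)
    (W : Submodule ℂ V) [FiniteDimensional ℂ ↥W]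
    (hinv : ∀ (g : G), ∀ x ∈ W, π g x ∈ W)
    (hnt : ∃ (g : G), ∃ x ∈ W, π g x ≠ x) :
    D ≤ Module.finrank ℂ ↥W := by
  classical
  set n := Module.finrank ℂ ↥W with hn
  let B := stdOrthonormalBasis ℂ ↥W
  -- the restricted action on W
  let ρ : G → (↥W ≃ₗᵢ[ℂ] ↥W) := fun g =>
    { toFun := fun x => ⟨π g ↑x, hinv g ↑x x.2⟩
      map_add' := fun a b => Subtype.ext (by push_cast; rw [map_add])
      map_smul' := fun m a => Subtype.ext (by push_cast; rw [_root_.map_smul]; rfl)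
      invFun := fun x => ⟨π g⁻¹ ↑x, hinv g⁻¹ ↑x x.2⟩
      left_inv := fun a => Subtype.ext (by simp only; exact pi_inv_apply π g ↑a)
      right_inv := fun a => Subtype.ext (by
        simp only
        conv_rhs => rw [← pi_inv_apply π g⁻¹ (↑a : V)]
        rw [inv_inv])
      norm_map' := fun a => by
        rw [← Submodule.norm_coe]
        exact (π g).norm_map ↑a }
  have hρ_apply : ∀ (g : G) (x : ↥W), ((ρ g x : ↥W) : V) = π g ↑x := fun g x => rfl
  have hρ_mul : ∀ g h : G, ρ (g * h) = ρ g * ρ h := by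
    intro g h
    apply LinearIsometryEquiv.ext
    intro x
    apply Subtype.ext
    rw [LinearIsometryEquiv.coe_mul, Function.comp_apply]
    rw [hρ_apply, hρ_apply, hρ_apply]
    exact pi_mul_apply π g h ↑x
  let ρh : G →* (↥W ≃ₗᵢ[ℂ] ↥W) := MonoidHom.mk' ρ hρ_mul
  -- transport to a Euclidean space
  let π' : G → (EuclideanSpace ℂ (Fin n) ≃ₗᵢ[ℂ] EuclideanSpace ℂ (Fin n)) := fun g =>
    (B.repr.symm.trans (ρh g)).trans B.repr
  have hπ'_mul : ∀ g h : G, π' (g * h) = π' g * π' h := by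
    intro g h
    apply LinearIsometryEquiv.ext
    intro x
    rw [LinearIsometryEquiv.coe_mul, Function.comp_apply]
    simp only [π', LinearIsometryEquiv.trans_apply, LinearIsometryEquiv.symm_apply_apply]
    rw [show ρh (g * h) = ρh g * ρh h from map_mul ρh g h, LinearIsometryEquiv.coe_mul,
      Function.comp_apply]
  let π'h : G →* (EuclideanSpace ℂ (Fin n) ≃ₗᵢ[ℂ] EuclideanSpace ℂ (Fin n)) :=
    MonoidHom.mk' π' hπ'_mul
  have hcont : ∀ x : EuclideanSpace ℂ (Fin n), Continuous fun g : G => π'h g x := by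
    intro x
    have h1 : Continuous fun g : G => (ρ g (B.repr.symm x) : ↥W) := by
      apply Continuous.subtype_mk
      exact hπ ↑(B.repr.symm x)
    exact B.repr.continuous.comp h1
  have hnt' : ∃ (g : G) (x : EuclideanSpace ℂ (Fin n)), π'h g x ≠ x := by
    obtain ⟨g, x, hxW, hne⟩ := hnt
    refine ⟨g, B.repr ⟨x, hxW⟩, fun hcontr => hne ?_⟩
    have : ρ g ⟨x, hxW⟩ = ⟨x, hxW⟩ := by
      have h2 : B.repr (ρ g (B.repr.symm (B.repr ⟨x, hxW⟩))) = B.repr ⟨x, hxW⟩ := hcontr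
      rw [LinearIsometryEquiv.symm_apply_apply] at h2
      exact B.repr.injective h2
    have h3 := congrArg (Subtype.val) this
    rw [hρ_apply] at h3
    exact h3
  have := hQR (EuclideanSpace ℂ (Fin n)) π'h hcont hnt'
  rwa [finrank_euclideanSpace_fin] at this

end Rep


/-- If `G` is a `D`-quasi-random compact group with Haar probability measure and
`π : G ↷ V` is a continuous unitary representation on a complex Hilbert space `V`, then for
all `u, v ∈ V`, `∫_G |⟨u, π^g v⟩ − ⟨P°_π u, P°_π v⟩|² dg ≤ D^{-1/2}·‖u‖²·‖v‖²`. -/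
theorem integral_inner_sq_fixed_projection_bound
    {G V : Type*} [Group G] [TopologicalSpace G] [IsTopologicalGroup G] [CompactSpace G]
    [MeasurableSpace G] [BorelSpace G]
    (μ : Measure G) [μ.IsHaarMeasure] [IsProbabilityMeasure μ]
    [NormedAddCommGroup V] [InnerProductSpace ℂ V] [CompleteSpace V]
    (D : ℕ) (hD : 0 < D) (hQR : IsQuasiRandom G D)
    (π : G →* (V ≃ₗᵢ[ℂ] V)) (hπ : ∀ v : V, Continuous fun g : G => π g v)
    (u v : V) :
    ∫ g, ‖⟪u, π g v⟫_ℂ - ⟪fixedProjection π u, fixedProjection π v⟫_ℂ‖ ^ 2 ∂μ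
      ≤ (D : ℝ) ^ (-(1 / 2 : ℝ)) * ‖u‖ ^ 2 * ‖v‖ ^ 2 := by
  classical
  set K : Submodule ℂ V := fixedSubmodule π with hK
  haveI : CompleteSpace ↥K := (isClosed_fixedSubmodule π).completeSpace_coe
  set P : V →L[ℂ] V := fixedProjection π with hP
  have hPmem : ∀ w : V, P w ∈ K := fun w => (K.orthogonalProjectionOnto w).2
  have horth : ∀ (w f : V), f ∈ K → ⟪w - P w, f⟫_ℂ = 0 := fun w f hf =>
    K.starProjection_inner_eq_zero w f hf
  have hfix : ∀ (g : G) (f : V), f ∈ K → π g f = f := fun g f hf => hf g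
  have hinnerfix : ∀ (g : G) (f w : V), f ∈ K → ⟪f, π g w⟫_ℂ = ⟪f, w⟫_ℂ := by
    intro g f w hf
    calc ⟪f, π g w⟫_ℂ = ⟪π g f, π g w⟫_ℂ := by rw [hfix g f hf]
      _ = ⟪f, w⟫_ℂ := (π g).inner_map_map f w
  set u' : V := u - P u with hu'
  set v' : V := v - P v with hv'
  have hpoint : ∀ g : G, ⟪u, π g v⟫_ℂ - ⟪P u, P v⟫_ℂ = ⟪u', π g v'⟫_ℂ := by
    intro g
    have h1 : π g (P v) = P v := hfix g _ (hPmem v)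
    have e1 : ⟪u', π g v'⟫_ℂ
        = ⟪u, π g v⟫_ℂ - ⟪u, P v⟫_ℂ - (⟪P u, π g v⟫_ℂ - ⟪P u, P v⟫_ℂ) := by
      rw [hu', hv', map_sub, h1, inner_sub_left, inner_sub_right, inner_sub_right]
    have h2 : ⟪u, P v⟫_ℂ = ⟪P u, P v⟫_ℂ := by
      have h0 := horth u (P v) (hPmem v)
      rw [inner_sub_left] at h0
      exact (sub_eq_zero.mp h0)
    have h3 : ⟪P u, π g v⟫_ℂ = ⟪P u, P v⟫_ℂ := by
      rw [hinnerfix g _ v (hPmem u)]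
      have h0 := horth v (P u) (hPmem u)
      have h0' : ⟪P u, v - P v⟫_ℂ = 0 := by
        rw [← inner_conj_symm, h0, map_zero]
      rw [inner_sub_right] at h0'
      exact (sub_eq_zero.mp h0')
    rw [e1, h2, h3]
    ring
  set c : G → V := fun g => π g v' with hc
  have hc_cont : Continuous c := hπ v'
  have hc_norm : ∀ g, ‖c g‖ = ‖v'‖ := fun g => (π g).norm_map v'
  set F : G → (V →L[ℂ] V) := fun g => (innerSL ℂ (c g)).smulRight (c g) with hF
  have hF_apply : ∀ (g : G) (w : V), F g w = ⟪c g, w⟫_ℂ • c g := fun g w => rfl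
  have hF_cont : Continuous F := by
    have h1 : Continuous fun g : G => innerSL ℂ (c g) := (innerSL ℂ (E := V)).continuous.comp hc_cont
    have h2 : Continuous fun g : G => (ContinuousLinearMap.smulRightL ℂ V V) (innerSL ℂ (c g)) :=
      (ContinuousLinearMap.smulRightL ℂ V V).continuous.comp h1
    exact h2.clm_apply hc_cont
  have hF_int : Integrable F μ := continuous_integrable_of_compact μ hF_cont
  set T : V →L[ℂ] V := ∫ g, F g ∂μ with hT
  have hint_smul : ∀ x : V, Integrable (fun g => ⟪c g, x⟫_ℂ • c g) μ := fun x =>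
    continuous_integrable_of_compact μ ((hc_cont.inner continuous_const).smul hc_cont)
  have hT_apply : ∀ w : V, T w = ∫ g, ⟪c g, w⟫_ℂ • c g ∂μ := by
    intro w
    rw [hT, ContinuousLinearMap.integral_apply hF_int w]
    rfl
  have hint_mul : ∀ x w : V, Integrable (fun g => ⟪c g, w⟫_ℂ * ⟪x, c g⟫_ℂ) μ := fun x w =>
    continuous_integrable_of_compact μ
      ((hc_cont.inner continuous_const).mul (continuous_const.inner hc_cont))
  have hT_inner : ∀ x w : V, ⟪x, T w⟫_ℂ = ∫ g, ⟪c g, w⟫_ℂ * ⟪x, c g⟫_ℂ ∂μ := by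
    intro x w
    rw [hT_apply w, ← integral_inner (hint_smul w) x]
    congr 1
    funext g
    rw [inner_smul_right]
  have hT_symm : ∀ x y : V, ⟪T x, y⟫_ℂ = ⟪x, T y⟫_ℂ := by
    intro x y
    calc ⟪T x, y⟫_ℂ = (starRingEnd ℂ) ⟪y, T x⟫_ℂ := (inner_conj_symm _ _).symm
      _ = (starRingEnd ℂ) (∫ g, ⟪c g, x⟫_ℂ * ⟪y, c g⟫_ℂ ∂μ) := by rw [hT_inner y x]
      _ = ∫ g, (starRingEnd ℂ) (⟪c g, x⟫_ℂ * ⟪y, c g⟫_ℂ) ∂μ := (integral_conj).symm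
      _ = ∫ g, ⟪c g, y⟫_ℂ * ⟪x, c g⟫_ℂ ∂μ := by
          congr 1
          funext g
          rw [map_mul, inner_conj_symm, inner_conj_symm]
          ring
      _ = ⟪x, T y⟫_ℂ := (hT_inner x y).symm
  have hT_self : ∀ x : V, ⟪x, T x⟫_ℂ = ((∫ g, ‖⟪x, c g⟫_ℂ‖ ^ 2 ∂μ : ℝ) : ℂ) := by
    intro x
    rw [hT_inner x x]
    have hfun : (fun g => ⟪c g, x⟫_ℂ * ⟪x, c g⟫_ℂ)
        = fun g => ((‖⟪x, c g⟫_ℂ‖ ^ 2 : ℝ) : ℂ) := by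
      funext g
      have h1 : ⟪c g, x⟫_ℂ = (starRingEnd ℂ) ⟪x, c g⟫_ℂ := (inner_conj_symm _ _).symm
      rw [h1, RCLike.conj_mul]
      norm_cast
    rw [hfun]
    exact integral_ofReal
  have hT_re : ∀ x : V, (⟪x, T x⟫_ℂ).re = ∫ g, ‖⟪x, c g⟫_ℂ‖ ^ 2 ∂μ := fun x => by
    rw [hT_self x, Complex.ofReal_re]
  have hT_pos : ∀ x : V, 0 ≤ (⟪x, T x⟫_ℂ).re := by
    intro x
    rw [hT_re]
    exact integral_nonneg fun g => sq_nonneg _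
  have hT_comm : ∀ (h : G) (x : V), π h (T x) = T (π h x) := by
    intro h x
    calc π h (T x) = π h (∫ g, ⟪c g, x⟫_ℂ • c g ∂μ) := by rw [hT_apply]
      _ = ∫ g, π h (⟪c g, x⟫_ℂ • c g) ∂μ :=
          ((π h).toLinearIsometry.integral_comp_comm (fun g => ⟪c g, x⟫_ℂ • c g)).symm
      _ = ∫ g, ⟪c (h * g), π h x⟫_ℂ • c (h * g) ∂μ := by
          congr 1
          funext g
          rw [_root_.map_smul]
          have hcg : c (h * g) = π h (c g) := pi_mul_apply π h g v'
          rw [hcg, (π h).inner_map_map]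
      _ = ∫ g, ⟪c g, π h x⟫_ℂ • c g ∂μ :=
          integral_mul_left_eq_self (fun k => ⟪c k, π h x⟫_ℂ • c k) h
      _ = T (π h x) := (hT_apply _).symm
  have hT_orthfix : ∀ (x f : V), f ∈ K → ⟪f, T x⟫_ℂ = 0 := by
    intro x f hf
    rw [hT_inner f x]
    have hz : ∀ g : G, ⟪f, c g⟫_ℂ = 0 := by
      intro g
      rw [hc]
      rw [hinnerfix g f v' hf, ← inner_conj_symm, horth v f hf, map_zero]
    have : ∀ g : G, ⟪c g, x⟫_ℂ * ⟪f, c g⟫_ℂ = 0 := fun g => by rw [hz g, mul_zero]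
    simp only [this, integral_zero]
  have hT_compact : IsCompactOperator ⇑T := by
    have hclosed : IsClosed {A : V →L[ℂ] V | IsCompactOperator ⇑A} :=
      isClosed_setOf_isCompactOperator
    let Sc : Submodule ℂ (V →L[ℂ] V) :=
      { carrier := {A : V →L[ℂ] V | IsCompactOperator ⇑A}
        add_mem' := fun ha hb => ha.add hb
        zero_mem' := isCompactOperator_zero
        smul_mem' := fun a A hA => hA.smul a }
    haveI : CompleteSpace ↥Sc := hclosed.completeSpace_coe
    have hFS : ∀ g : G, F g ∈ Sc := by
      intro g
      show IsCompactOperator ⇑(F g)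
      refine ⟨(fun t : ℂ => t • c g) '' Metric.closedBall 0 ‖c g‖, ?_, ?_⟩
      · exact (isCompact_closedBall 0 _).image (continuous_id.smul continuous_const)
      · refine Filter.mem_of_superset (Metric.closedBall_mem_nhds 0 one_pos) ?_
        intro w hw
        refine ⟨⟪c g, w⟫_ℂ, ?_, rfl⟩
        rw [Metric.mem_closedBall, dist_zero_right]
        calc ‖⟪c g, w⟫_ℂ‖ ≤ ‖c g‖ * ‖w‖ := norm_inner_le_norm _ _
          _ ≤ ‖c g‖ * 1 := by
              apply mul_le_mul_of_nonneg_left _ (norm_nonneg _)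
              rwa [Metric.mem_closedBall, dist_zero_right] at hw
          _ = ‖c g‖ := mul_one _
    let F' : G → ↥Sc := fun g => ⟨F g, hFS g⟩
    have hF'c : Continuous F' := hF_cont.subtype_mk _
    have hF'int : Integrable F' μ := continuous_integrable_of_compact μ hF'c
    have hTS : Sc.subtypeL (∫ g, F' g ∂μ) = T := by
      calc Sc.subtypeL (∫ g, F' g ∂μ) = ∫ g, Sc.subtypeL (F' g) ∂μ :=
            (ContinuousLinearMap.integral_comp_comm _ hF'int).symm
        _ = ∫ g, F g ∂μ := rfl
        _ = T := hT.symm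
    have hmem : T ∈ Sc := hTS ▸ (∫ g, F' g ∂μ).2
    exact hmem
  have hLHSval : ∫ g, ‖⟪u, π g v⟫_ℂ - ⟪P u, P v⟫_ℂ‖ ^ 2 ∂μ = (⟪u', T u'⟫_ℂ).re := by
    rw [hT_re]
    congr 1
    funext g
    rw [hpoint g]
  have hnu2 : ‖u'‖ ^ 2 ≤ ‖u‖ ^ 2 := by
    have hd : u = P u + u' := by rw [hu']; abel
    have hip : ⟪P u, u'⟫_ℂ = 0 := by
      rw [← inner_conj_symm, horth u (P u) (hPmem u), map_zero]
    have hns : ‖P u + u'‖ ^ 2 = ‖P u‖ ^ 2 + 2 * RCLike.re ⟪P u, u'⟫_ℂ + ‖u'‖ ^ 2 :=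
      norm_add_sq (𝕜 := ℂ) _ _
    rw [hip] at hns
    simp only [map_zero, mul_zero, add_zero] at hns
    have h3 : ‖u‖ ^ 2 = ‖P u‖ ^ 2 + ‖u'‖ ^ 2 := by
      conv_lhs => rw [hd]
      exact hns
    nlinarith [sq_nonneg ‖P u‖]
  have hnv2 : ‖v'‖ ^ 2 ≤ ‖v‖ ^ 2 := by
    have hd : v = P v + v' := by rw [hv']; abel
    have hip : ⟪P v, v'⟫_ℂ = 0 := by
      rw [← inner_conj_symm, horth v (P v) (hPmem v), map_zero]
    have hns : ‖P v + v'‖ ^ 2 = ‖P v‖ ^ 2 + 2 * RCLike.re ⟪P v, v'⟫_ℂ + ‖v'‖ ^ 2 :=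
      norm_add_sq (𝕜 := ℂ) _ _
    rw [hip] at hns
    simp only [map_zero, mul_zero, add_zero] at hns
    have h3 : ‖v‖ ^ 2 = ‖P v‖ ^ 2 + ‖v'‖ ^ 2 := by
      conv_lhs => rw [hd]
      exact hns
    nlinarith [sq_nonneg ‖P v‖]
  have hRHS_nonneg : 0 ≤ (D : ℝ) ^ (-(1 / 2 : ℝ)) * ‖u‖ ^ 2 * ‖v‖ ^ 2 := by positivity
  rcases le_or_gt ((⟪u', T u'⟫_ℂ).re) 0 with hneg | hpos0
  · rw [hLHSval]
    exact hneg.trans hRHS_nonneg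
  · obtain ⟨lam, e, hlam_pos, he1, hTe, hlam_bound⟩ :=
      exists_eigenvector_of_compact hT_compact hT_symm hT_pos hpos0
    set W : Submodule ℂ V := LinearMap.ker ((T - (lam : ℂ) • (1 : V →L[ℂ] V) : V →L[ℂ] V) : V →ₗ[ℂ] V) with hW
    have hWmem : ∀ x : V, x ∈ W ↔ T x = (lam : ℂ) • x := by
      intro x
      rw [hW, LinearMap.mem_ker]
      have happ : (T - (lam : ℂ) • (1 : V →L[ℂ] V)) x = T x - (lam : ℂ) • x := by
        simp [ContinuousLinearMap.sub_apply, ContinuousLinearMap.smul_apply]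
      rw [ContinuousLinearMap.coe_coe, happ, sub_eq_zero]
    have hWclosed : IsClosed ((W : Submodule ℂ V) : Set V) := by
      rw [hW]
      exact ContinuousLinearMap.isClosed_ker _
    haveI : CompleteSpace ↥W := hWclosed.completeSpace_coe
    have heW : e ∈ W := (hWmem e).mpr hTe
    have hinvW : ∀ g : G, ∀ x ∈ W, π g x ∈ W := by
      intro g x hx
      rw [hWmem] at hx ⊢
      rw [← hT_comm g x, hx, _root_.map_smul]
    have hnt : ∃ g : G, ∃ x ∈ W, π g x ≠ x := by
      by_contra hcontr
      push_neg at hcontr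
      have heK : e ∈ K := by
        intro g
        exact hcontr g e heW
      have h0 := hT_orthfix e e heK
      have h1 : ⟪e, T e⟫_ℂ = (lam : ℂ) := by
        rw [hTe, inner_smul_right, inner_self_eq_norm_sq_to_K, he1]
        norm_num
      rw [h1] at h0
      exact (ne_of_gt hlam_pos) (by exact_mod_cast h0)
    have hfd : ¬ FiniteDimensional ℂ ↥W ∨ D ≤ Module.finrank ℂ ↥W := by
      by_cases hFD : FiniteDimensional ℂ ↥W
      · exact Or.inr (le_finrank_of_invariant hQR π hπ W hinvW hnt)
      · exact Or.inl hFD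
    obtain ⟨f, hfon, hfW⟩ := exists_orthonormal_in_submodule W D hfd
    have htrace : (D : ℝ) * lam ≤ ‖v'‖ ^ 2 := by
      have h1 : ∀ i : Fin D, ∫ g, ‖⟪f i, c g⟫_ℂ‖ ^ 2 ∂μ = lam := by
        intro i
        rw [← hT_re]
        have hTf := (hWmem (f i)).mp (hfW i)
        rw [hTf, inner_smul_right, inner_self_eq_norm_sq_to_K, hfon.1 i]
        simp
      have hint_i : ∀ i : Fin D, Integrable (fun g => ‖⟪f i, c g⟫_ℂ‖ ^ 2) μ := fun i =>
        continuous_integrable_of_compact μ (((continuous_const.inner hc_cont).norm).pow 2)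
      have h3 : ∫ g, (∑ i : Fin D, ‖⟪f i, c g⟫_ℂ‖ ^ 2) ∂μ = (D : ℝ) * lam := by
        rw [integral_finset_sum Finset.univ (fun i _ => hint_i i)]
        simp only [h1]
        rw [Finset.sum_const, Finset.card_univ, Fintype.card_fin, nsmul_eq_mul]
      have h4 : ∫ g, (∑ i : Fin D, ‖⟪f i, c g⟫_ℂ‖ ^ 2) ∂μ ≤ ∫ g, (‖v'‖ ^ 2 : ℝ) ∂μ := by
        apply integral_mono (integrable_finset_sum Finset.univ (fun i _ => hint_i i))
          (integrable_const _)
        intro g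
        have hb := hfon.sum_inner_products_le (c g) (s := Finset.univ)
        rw [hc_norm g] at hb
        exact hb
      have h5 : ∫ g, (‖v'‖ ^ 2 : ℝ) ∂μ = ‖v'‖ ^ 2 := by
        simp [integral_const, measure_univ]
      rw [h3, h5] at h4
      exact h4
    rw [hLHSval]
    have hstep1 : (⟪u', T u'⟫_ℂ).re ≤ lam * ‖u'‖ ^ 2 := hlam_bound u'
    have hDpos : (0 : ℝ) < D := Nat.cast_pos.mpr hD
    have hlam_le : lam ≤ ‖v'‖ ^ 2 / D := by
      rw [le_div_iff₀ hDpos]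
      linarith [htrace]
    have hrpow : (D : ℝ)⁻¹ ≤ (D : ℝ) ^ (-(1 / 2 : ℝ)) := by
      have hD1 : (1 : ℝ) ≤ (D : ℝ) := by exact_mod_cast hD
      have h1 : (D : ℝ) ^ (-1 : ℝ) ≤ (D : ℝ) ^ (-(1 / 2 : ℝ)) :=
        Real.rpow_le_rpow_of_exponent_le hD1 (by norm_num)
      rwa [Real.rpow_neg_one] at h1
    have hu'0 : 0 ≤ ‖u'‖ ^ 2 := sq_nonneg _
    have hv'0 : 0 ≤ ‖v'‖ ^ 2 := sq_nonneg _
    calc (⟪u', T u'⟫_ℂ).re ≤ lam * ‖u'‖ ^ 2 := hstep1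
      _ ≤ (‖v'‖ ^ 2 / D) * ‖u'‖ ^ 2 := mul_le_mul_of_nonneg_right hlam_le hu'0
      _ = (D : ℝ)⁻¹ * ‖u'‖ ^ 2 * ‖v'‖ ^ 2 := by ring
      _ ≤ (D : ℝ) ^ (-(1 / 2 : ℝ)) * ‖u‖ ^ 2 * ‖v‖ ^ 2 := by
          have hole : (0 : ℝ) ≤ (D : ℝ)⁻¹ := by positivity
          have hrp : (0 : ℝ) ≤ (D : ℝ) ^ (-(1 / 2 : ℝ)) := by positivity
          have hu2 : (0:ℝ) ≤ ‖u‖ ^ 2 := sq_nonneg _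
          calc (D : ℝ)⁻¹ * ‖u'‖ ^ 2 * ‖v'‖ ^ 2
              ≤ (D : ℝ)⁻¹ * ‖u‖ ^ 2 * ‖v‖ ^ 2 := by
                apply mul_le_mul
                · exact mul_le_mul_of_nonneg_left hnu2 hole
                · exact hnv2
                · exact hv'0
                · positivity
            _ ≤ (D : ℝ) ^ (-(1 / 2 : ℝ)) * ‖u‖ ^ 2 * ‖v‖ ^ 2 := by
                apply mul_le_mul_of_nonneg_right _ (sq_nonneg _)
                exact mul_le_mul_of_nonneg_right hrpow hu2
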